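/- Let H be the group of complex 4×4 matrices which in (1+3)×(1+3) block form equal [[v,0],[c,k]] with v > 0, k ∈ K, and c ∈ ℂ³ satisfying Re c = k e₁ − v e₁, and let H₀ ⊆ H be the subgroup of elements with c = 0 and k e₁ = v e₁ (equivalently, the matrices [[v,0,0,0],[0,v,a,a²/(2v)],[0,0,1,a/v],[0,0,0,1/v]] with v > 0, a ∈ ℝ). If b ∈ H₀ satisfies a⁻¹ b a ∈ H₀ for every a ∈ H, then b is the identity matrix. (Equivalently: the left action of H₀ on the homogeneous space H/H₀ is effective.) -/

import Mathlib

open Matrix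

/-- The bilinear form of the light cone: `Λ = [[0,0,−1],[0,1,0],[−1,0,0]]`. -/
def lightConeLambda : Matrix (Fin 3) (Fin 3) ℝ := !![0, 0, -1; 0, 1, 0; -1, 0, 0]

/-- The group `K = {k ∈ GL(3,ℝ) : kᵀΛk = Λ, det k = 1}`. -/
def Kgroup : Set (Matrix (Fin 3) (Fin 3) ℝ) :=
  {k | kᵀ * lightConeLambda * k = lightConeLambda ∧ k.det = 1}

/-- The first standard basis vector of `ℝ³`. -/
def e₁ : Fin 3 → ℝ := Pi.single 0 1

/-- The frame group `H`: complex 4×4 matrices in block form `[[v,0],[c,k]]` with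
`v > 0`, `k ∈ K`, and `Re c = k e₁ − v e₁`. -/
def Hset : Set (Matrix (Fin 1 ⊕ Fin 3) (Fin 1 ⊕ Fin 3) ℂ) :=
  {M | ∃ (v : ℝ) (c : Fin 3 → ℂ) (k : Matrix (Fin 3) (Fin 3) ℝ),
    0 < v ∧ k ∈ Kgroup ∧
    (∀ i : Fin 3, (c i).re = k.mulVec e₁ i - v * e₁ i) ∧
    M = Matrix.fromBlocks (Matrix.of fun _ _ => (v : ℂ)) 0
          (Matrix.of fun i _ => c i) (k.map (fun r => (r : ℂ)))}

/-- The isotropy subgroup `H₀ ⊆ H`: elements with `c = 0` and `k e₁ = v e₁`. -/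
def H₀set : Set (Matrix (Fin 1 ⊕ Fin 3) (Fin 1 ⊕ Fin 3) ℂ) :=
  {M | ∃ (v : ℝ) (k : Matrix (Fin 3) (Fin 3) ℝ),
    0 < v ∧ k ∈ Kgroup ∧ k.mulVec e₁ = v • e₁ ∧
    M = Matrix.fromBlocks (Matrix.of fun _ _ => (v : ℂ)) 0 0
          (k.map (fun r => (r : ℂ)))}

/-- If `b ∈ H₀` satisfies `a⁻¹ b a ∈ H₀` for every `a ∈ H`, then `b = 1`;
i.e. the left action of `H₀` on the homogeneous space `H/H₀` is effective. -/
theorem H₀_acts_effectively_on_H_mod_H₀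
    (b : Matrix (Fin 1 ⊕ Fin 3) (Fin 1 ⊕ Fin 3) ℂ) (hb : b ∈ H₀set)
    (h : ∀ a ∈ Hset, a⁻¹ * b * a ∈ H₀set) :
    b = 1 := by
  obtain ⟨v, k, hv, hk, hke, hbe⟩ := hb
  -- key: k.mulVec y = v • y for all real y
  have key : ∀ y : Fin 3 → ℝ, k.mulVec y = v • y := by
    intro y
    set C : Matrix (Fin 3) (Fin 1) ℂ := Matrix.of fun i _ => Complex.I * (y i : ℂ) with hC
    set a : Matrix (Fin 1 ⊕ Fin 3) (Fin 1 ⊕ Fin 3) ℂ :=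
      Matrix.fromBlocks (Matrix.of fun _ _ => ((1:ℝ) : ℂ)) 0 C
        ((1 : Matrix (Fin 3) (Fin 3) ℝ).map (fun r => (r : ℂ))) with ha
    have hmap1 : ((1 : Matrix (Fin 3) (Fin 3) ℝ).map (fun r => (r : ℂ))) = 1 := by
      ext i j
      by_cases hij : i = j <;> simp [Matrix.one_apply, hij]
    have h1K : (1 : Matrix (Fin 3) (Fin 3) ℝ) ∈ Kgroup := by
      constructor
      · simp [Matrix.transpose_one]
      · simp
    have haH : a ∈ Hset := by
      refine ⟨1, fun i => Complex.I * (y i : ℂ), 1, one_pos, h1K, ?_, by rw [ha]⟩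
      intro i
      simp [Matrix.one_mulVec]
    obtain ⟨v', k', hv', hk', hk'e, heq⟩ := h a haH
    have hadet : IsUnit a.det := by
      rw [ha, Matrix.det_fromBlocks_zero₁₂, hmap1]
      simp [Matrix.det_fin_one]
    set M₀ : Matrix (Fin 1 ⊕ Fin 3) (Fin 1 ⊕ Fin 3) ℂ :=
      Matrix.fromBlocks (Matrix.of fun _ _ => (v' : ℂ)) 0 0
        (k'.map (fun r => (r : ℂ))) with hM₀
    have hba : b * a = a * M₀ := by
      have := congrArg (fun M => a * M) heq
      rw [← Matrix.mul_assoc, ← Matrix.mul_assoc, Matrix.mul_nonsing_inv a hadet,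
        Matrix.one_mul] at this
      exact this
    -- compare top-left entries to get v' = v
    have hbb : (Matrix.fromBlocks (Matrix.of fun _ _ => (v : ℂ)) 0 0
        (k.map (fun r => (r : ℂ)))) * a = a * M₀ := by rw [← hbe]; exact hba
    rw [ha, hM₀, Matrix.fromBlocks_multiply, Matrix.fromBlocks_multiply] at hbb
    have h11 := congrFun (congrFun hbb (Sum.inl 0)) (Sum.inl 0)
    have h21 := fun i : Fin 3 => congrFun (congrFun hbb (Sum.inr i)) (Sum.inl 0)
    simp only [Matrix.fromBlocks_apply₁₁, Matrix.fromBlocks_apply₂₁] at h11 h21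
    have hv'v : (v' : ℂ) = (v : ℂ) := by
      simpa [Matrix.mul_apply, Fin.sum_univ_succ] using h11.symm
    funext i
    have hi := h21 i
    rw [hmap1] at hi
    simp only [Matrix.add_apply, Matrix.mul_apply, Matrix.zero_apply, zero_mul, mul_zero,
      Matrix.map_apply, Matrix.of_apply, Finset.sum_const_zero, add_zero, zero_add,
      hC, Matrix.one_mul, Fin.sum_univ_one] at hi
    rw [hv'v] at hi
    have hfin : Complex.I * (((k *ᵥ y) i : ℝ) : ℂ) = Complex.I * (((v • y) i : ℝ) : ℂ) := by
      calc Complex.I * (((k *ᵥ y) i : ℝ) : ℂ)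
          = ∑ j, (k i j : ℂ) * (Complex.I * (y j : ℂ)) := by
            simp only [Matrix.mulVec, dotProduct]
            push_cast
            rw [Finset.mul_sum]
            exact Finset.sum_congr rfl fun j _ => by ring
        _ = Complex.I * (y i : ℂ) * (v : ℂ) := hi
        _ = Complex.I * (((v • y) i : ℝ) : ℂ) := by
            simp only [Pi.smul_apply, smul_eq_mul]
            push_cast
            ring
    exact_mod_cast mul_left_cancel₀ Complex.I_ne_zero hfin
  -- now k = v • 1
  have hkv : k = v • (1 : Matrix (Fin 3) (Fin 3) ℝ) := by
    ext i j
    have := congrFun (key (Pi.single j 1)) i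
    simpa [Matrix.mulVec_single, Matrix.one_apply, Pi.single_apply, mul_comm] using this
  have hv3 : v ^ 3 = 1 := by
    have := hk.2
    rw [hkv] at this
    simpa [Matrix.det_smul, Fintype.card_fin] using this
  have hv1 : v = 1 := by nlinarith [sq_nonneg v, sq_nonneg (v - 1)]
  rw [hbe, hkv, hv1]
  rw [← Matrix.fromBlocks_one]
  ext i j
  rcases i with i | i <;> rcases j with j | j
  · simp [Matrix.one_apply, Subsingleton.elim i j]
  · simp
  · simp
  · simp [Matrix.one_apply, apply_ite (fun r : ℝ => (r : ℂ))]
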